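/- Let F be a field, N, Q positive integers, witness vectors a, b, c ∈ F^N, public data u_q, v_q, w_q ∈ F^N, k_q ∈ F for q = 1,…,Q, and fix a nonzero y ∈ F. Define the univariate Laurent polynomials r₁[X] = Σ_{i=1}^N a_i X^i + Σ_{i=1}^N b_i X^{−i} + Σ_{i=1}^N c_i X^{−i−N}, r_y[X] = Σ_{i=1}^N a_i (yX)^i + Σ_{i=1}^N b_i (yX)^{−i} + Σ_{i=1}^N c_i (yX)^{−i−N}, and s_y[X] = Σ_{i=1}^N û_i(y) X^{−i} + Σ_{i=1}^N v̂_i(y) X^{i} + Σ_{i=1}^N ŵ_i(y) X^{i+N}, where û_i(y) = Σ_{q=1}^Q u_{q,i} y^{q+N}, v̂_i(y) = Σ_{q=1}^Q v_{q,i} y^{q+N}, ŵ_i(y) = −y^i − y^{−i} + Σ_{q=1}^Q w_{q,i} y^{q+N}, and k̂(y) = Σ_{q=1}^Q k_q y^{q+N}. Then the coefficient of X^0 in the Laurent polynomial t_y[X] := r₁[X]·(r_y[X] + s_y[X]) − k̂(y) equals 𝒞[y] = Σ_{i=1}^N (a_i b_i − c_i)(y^i + y^{−i}) + Σ_{q=1}^Q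 (a·u_q + b·v_q + c·w_q − k_q) y^{q+N}. -/

import Mathlib

open LaurentPolynomial


section SonicAux

variable {F : Type*} [Field F]

private lemma LP_add_apply (p q : LaurentPolynomial F) (n : ℤ) : (p + q).coeff n = p.coeff n + q.coeff n :=
  Finsupp.add_apply _ _ _

private lemma LP_sub_apply (p q : LaurentPolynomial F) (n : ℤ) : (p - q).coeff n = p.coeff n - q.coeff n :=
  Finsupp.sub_apply _ _ _

private lemma coeff_C (a : F) : (C a : LaurentPolynomial F).coeff 0 = a := by
  have h := single_eq_C_mul_T a 0
  rw [T_zero, mul_one] at h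
  rw [← h, AddMonoidAlgebra.coeff_single, Finsupp.single_eq_same]

section conds
variable {N : ℕ} (i j : Fin N)

private lemma diag1 : ((i:ℤ) + 1 + -((j:ℤ) + 1) = 0) ↔ i = j := by
  rw [Fin.ext_iff]; omega
private lemma diag2 : (-((i:ℤ) + 1) + ((j:ℤ) + 1) = 0) ↔ i = j := by
  rw [Fin.ext_iff]; omega
private lemma diag3 : (-((i:ℤ) + 1) - (N:ℤ) + ((j:ℤ) + 1 + (N:ℤ)) = 0) ↔ i = j := by
  rw [Fin.ext_iff]; omega
private lemma f1 : ¬((i:ℤ) + 1 + ((j:ℤ) + 1) = 0) := by omega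
private lemma f2 : ¬(-((i:ℤ) + 1) - (N:ℤ) + ((j:ℤ) + 1) = 0) := by have := j.isLt; omega
private lemma f3 : ¬(-((i:ℤ) + 1) + -((j:ℤ) + 1) = 0) := by omega
private lemma f4 : ¬(-((i:ℤ) + 1) - (N:ℤ) + -((j:ℤ) + 1) = 0) := by omega
private lemma f5 : ¬((i:ℤ) + 1 + (-((j:ℤ) + 1) - (N:ℤ)) = 0) := by have := i.isLt; omega
private lemma f6 : ¬(-((i:ℤ) + 1) + (-((j:ℤ) + 1) - (N:ℤ)) = 0) := by omega
private lemma f7 : ¬(-((i:ℤ) + 1) - (N:ℤ) + (-((j:ℤ) + 1) - (N:ℤ)) = 0) := by omega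
private lemma f8 : ¬((i:ℤ) + 1 + ((j:ℤ) + 1 + (N:ℤ)) = 0) := by omega
private lemma f9 : ¬(-((i:ℤ) + 1) + ((j:ℤ) + 1 + (N:ℤ)) = 0) := by have := i.isLt; omega

end conds

private lemma coeff_CT (a : F) (n m : ℤ) :
    ((C a * T n : LaurentPolynomial F).coeff m) = if n = m then a else 0 := by
  rw [← single_eq_C_mul_T, AddMonoidAlgebra.coeff_single, Finsupp.single_apply]

private lemma CT_mul_CT (a b : F) (n m : ℤ) :
    (C a * T n) * (C b * T m) = C (a * b) * T (n + m) := by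
  rw [map_mul, T_add]; ring

private lemma sum_CT_mul_sum_CT_apply {ι κ : Type*} (s : Finset ι) (t : Finset κ)
    (f : ι → F) (d : ι → ℤ) (g : κ → F) (e : κ → ℤ) (n : ℤ) :
    (((∑ i ∈ s, C (f i) * T (d i)) * (∑ j ∈ t, C (g j) * T (e j)) : LaurentPolynomial F).coeff n) =
      ∑ i ∈ s, ∑ j ∈ t, if d i + e j = n then f i * g j else 0 := by
  rw [Finset.sum_mul_sum]
  simp_rw [CT_mul_CT]
  rw [AddMonoidAlgebra.coeff_sum, Finsupp.finset_sum_apply]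
  refine Finset.sum_congr rfl fun i _ => ?_
  rw [AddMonoidAlgebra.coeff_sum, Finsupp.finset_sum_apply]
  exact Finset.sum_congr rfl fun j _ => coeff_CT _ _ _

end SonicAux

/-- `r₁[X] = r[X,1] = Σᵢ aᵢ Xⁱ + Σᵢ bᵢ X⁻ⁱ + Σᵢ cᵢ X^{-i-N}` of the Sonic encoding. -/
noncomputable def sonicR1 {F : Type*} [Field F] {N : ℕ} (a b c : Fin N → F) :
    LaurentPolynomial F :=
  (∑ i : Fin N, LaurentPolynomial.C (a i) * LaurentPolynomial.T ((i : ℤ) + 1)) +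
  (∑ i : Fin N, LaurentPolynomial.C (b i) * LaurentPolynomial.T (-((i : ℤ) + 1))) +
  (∑ i : Fin N, LaurentPolynomial.C (c i) * LaurentPolynomial.T (-((i : ℤ) + 1) - (N : ℤ)))

/-- `r_y[X] = r[X,y] = Σᵢ aᵢ (yX)ⁱ + Σᵢ bᵢ (yX)⁻ⁱ + Σᵢ cᵢ (yX)^{-i-N}`. -/
noncomputable def sonicRy {F : Type*} [Field F] {N : ℕ} (a b c : Fin N → F) (y : F) :
    LaurentPolynomial F :=
  (∑ i : Fin N, LaurentPolynomial.C (a i * y ^ ((i : ℤ) + 1)) *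
      LaurentPolynomial.T ((i : ℤ) + 1)) +
  (∑ i : Fin N, LaurentPolynomial.C (b i * y ^ (-((i : ℤ) + 1))) *
      LaurentPolynomial.T (-((i : ℤ) + 1))) +
  (∑ i : Fin N, LaurentPolynomial.C (c i * y ^ (-((i : ℤ) + 1) - (N : ℤ))) *
      LaurentPolynomial.T (-((i : ℤ) + 1) - (N : ℤ)))

/-- `s_y[X] = s[X,y] = Σᵢ ûᵢ(y) X⁻ⁱ + Σᵢ v̂ᵢ(y) Xⁱ + Σᵢ ŵᵢ(y) X^{i+N}` where
`ûᵢ(y) = Σ_q u_{q,i} y^{q+N}`, `v̂ᵢ(y) = Σ_q v_{q,i} y^{q+N}`,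
`ŵᵢ(y) = -yⁱ - y⁻ⁱ + Σ_q w_{q,i} y^{q+N}`. -/
noncomputable def sonicSy {F : Type*} [Field F] {N Q : ℕ}
    (u v w : Fin Q → Fin N → F) (y : F) : LaurentPolynomial F :=
  (∑ i : Fin N, LaurentPolynomial.C (∑ q : Fin Q, u q i * y ^ ((q : ℤ) + 1 + (N : ℤ))) *
      LaurentPolynomial.T (-((i : ℤ) + 1))) +
  (∑ i : Fin N, LaurentPolynomial.C (∑ q : Fin Q, v q i * y ^ ((q : ℤ) + 1 + (N : ℤ))) *
      LaurentPolynomial.T ((i : ℤ) + 1)) +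
  (∑ i : Fin N, LaurentPolynomial.C (-y ^ ((i : ℤ) + 1) - y ^ (-((i : ℤ) + 1)) +
        ∑ q : Fin Q, w q i * y ^ ((q : ℤ) + 1 + (N : ℤ))) *
      LaurentPolynomial.T ((i : ℤ) + 1 + (N : ℤ)))

/-- `k̂(y) = Σ_q k_q y^{q+N}`. -/
def sonicKhat {F : Type*} [Field F] {Q : ℕ} (N : ℕ) (k : Fin Q → F) (y : F) : F :=
  ∑ q : Fin Q, k q * y ^ ((q : ℤ) + 1 + (N : ℤ))

/-- The coefficient of `X^0` in
`t_y[X] = r₁[X]·(r_y[X] + s_y[X]) - k̂(y)` equals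
`𝒞[y] = Σᵢ (aᵢbᵢ - cᵢ)(yⁱ + y⁻ⁱ) + Σ_q (a·u_q + b·v_q + c·w_q - k_q) y^{q+N}`. -/
theorem sonic_constant_term_eq_constraint_eval (F : Type*) [Field F] (N Q : ℕ)
    (hN : 0 < N) (hQ : 0 < Q)
    (a b c : Fin N → F) (u v w : Fin Q → Fin N → F) (k : Fin Q → F)
    (y : F) (hy : y ≠ 0) :
    (sonicR1 a b c * (sonicRy a b c y + sonicSy u v w y) -
        LaurentPolynomial.C (sonicKhat N k y)).coeff 0 =
      (∑ i : Fin N, (a i * b i - c i) * (y ^ ((i : ℤ) + 1) + y ^ (-((i : ℤ) + 1)))) +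
      (∑ q : Fin Q, ((∑ j, a j * u q j) + (∑ j, b j * v q j) + (∑ j, c j * w q j) - k q) *
        y ^ ((q : ℤ) + 1 + (N : ℤ))) := by
  rw [sonicR1, sonicRy, sonicSy]
  simp only [LP_sub_apply, add_mul, mul_add, LP_add_apply, sum_CT_mul_sum_CT_apply, coeff_C,
    diag1, diag2, diag3, f1, f2, f3, f4, f5, f6, f7, f8, f9, if_false,
    Finset.sum_const_zero, Finset.sum_ite_eq, Finset.mem_univ, if_true,
    add_zero, zero_add]
  rw [sonicKhat]
  have hswap : ∀ f : Fin N → Fin Q → F,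
      (∑ i : Fin N, ∑ q : Fin Q, f i q) = ∑ q : Fin Q, ∑ i : Fin N, f i q :=
    fun f => Finset.sum_comm
  simp only [Finset.mul_sum, mul_sub, mul_neg, sub_mul, add_mul, Finset.sum_mul,
    Finset.sum_add_distrib, Finset.sum_sub_distrib, Finset.sum_neg_distrib, hswap]
  ring_nf
  rw [show ∑ x : Fin N, b x * a x * y ^ (1 + (x:ℤ)) =
      ∑ x : Fin N, a x * b x * y ^ ((x:ℤ) + 1) from
    Finset.sum_congr rfl fun x _ => by ring]
  rw [show ∑ x : Fin Q, ∑ x_1 : Fin N, a x_1 * u x x_1 * y ^ (1 + (x:ℤ) + (N:ℤ)) =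
      ∑ x : Fin Q, ∑ x_1 : Fin N, y ^ (1 + (N:ℤ) + (x:ℤ)) * a x_1 * u x x_1 from
    Finset.sum_congr rfl fun x _ => Finset.sum_congr rfl fun x_1 _ => by
      rw [add_right_comm 1, mul_comm, mul_assoc]]
  ring
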